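/- The number of Dyck paths of semilength n with exactly k long ascents (ascents of length at least 2) equals (1/(n+1)) \binom{n+1}{k} \sum_{j=2k}^{n} \binom{j-k-1}{k-1} \binom{n+1-k}{n-j} for k \ge 1. -/

import Mathlib

open DyckStep List

namespace DyckAux

/-- big entry -/
def big (v : ℕ) : Bool := decide (2 ≤ v)

/-- turn a gap list into a Dyck-step word: each gap `a` becomes `U^a D`. -/
def word (g : List ℕ) : List DyckStep := (g.map fun a => List.replicate a U ++ [D]).flatten

@[simp] lemma word_nil : word [] = [] := rfl

lemma word_cons (a : ℕ) (g : List ℕ) :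
    word (a :: g) = List.replicate a U ++ D :: word g := by
  simp [word, List.flatten]

lemma word_append (g h : List ℕ) : word (g ++ h) = word g ++ word h := by
  simp [word]

@[simp] lemma length_word (g : List ℕ) : (word g).length = g.sum + g.length := by
  induction g with
  | nil => rfl
  | cons a g ih =>
    simp only [word_cons, List.length_append, List.length_replicate, List.length_cons, ih,
      List.sum_cons]
    omega


@[simp] lemma countU_word (g : List ℕ) : (word g).count U = g.sum := by
  induction g with
  | nil => rfl
  | cons a g ih => simp [word_cons, List.count_append, ih, List.count_replicate, List.count_cons]

@[simp] lemma countD_word (g : List ℕ) : (word g).count D = g.length := by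
  induction g with
  | nil => rfl
  | cons a g ih =>
    simp [word_cons, List.count_append, ih, List.count_replicate, List.count_cons]

/-- gap list of a Dyck-step word: run lengths of `U`s before each `D` (trailing `U`s dropped). -/
def gaps : List DyckStep → List ℕ
  | [] => []
  | D :: l => 0 :: gaps l
  | U :: l => match gaps l with
    | [] => []
    | a :: t => (a + 1) :: t

@[simp] lemma gaps_nil : gaps [] = [] := rfl
@[simp] lemma gaps_D_cons (l : List DyckStep) : gaps (D :: l) = 0 :: gaps l := rfl
lemma gaps_U_cons (l : List DyckStep) (a : ℕ) (t : List ℕ) (h : gaps l = a :: t) :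
    gaps (U :: l) = (a + 1) :: t := by
  simp [gaps, h]

lemma gaps_run (a : ℕ) (l : List DyckStep) :
    gaps (List.replicate a U ++ D :: l) = a :: gaps l := by
  induction a with
  | zero => simp
  | succ a ih =>
    rw [List.replicate_succ, List.cons_append, gaps_U_cons _ a (gaps l) ih]

lemma gaps_word (g : List ℕ) : gaps (word g) = g := by
  induction g with
  | nil => rfl
  | cons a g ih => rw [word_cons, gaps_run, ih]


lemma gaps_concat_ne_nil (l : List DyckStep) : gaps (l ++ [D]) ≠ [] := by
  induction l with
  | nil => simp
  | cons x l ih =>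
    cases x with
    | D => simp
    | U =>
      obtain ⟨a, t, h⟩ : ∃ a t, gaps (l ++ [D]) = a :: t := by
        cases h : gaps (l ++ [D]) with
        | nil => exact absurd h ih
        | cons a t => exact ⟨a, t, rfl⟩
      rw [List.cons_append, gaps_U_cons _ a t h]
      simp

lemma word_gaps_concat (l : List DyckStep) : word (gaps (l ++ [D])) = l ++ [D] := by
  induction l with
  | nil => simp [gaps, word]
  | cons x l ih =>
    cases x with
    | D =>
      rw [List.cons_append, gaps_D_cons, word_cons]
      simp [ih]
    | U =>
      obtain ⟨a, t, h⟩ : ∃ a t, gaps (l ++ [D]) = a :: t := by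
        cases h : gaps (l ++ [D]) with
        | nil => exact absurd h (gaps_concat_ne_nil l)
        | cons a t => exact ⟨a, t, rfl⟩
      rw [List.cons_append, gaps_U_cons _ a t h, word_cons, List.replicate_succ,
        List.cons_append, ← word_cons, ← h, ih]

lemma gaps_replicate_D (c : ℕ) (l : List DyckStep) :
    gaps (List.replicate c D ++ l) = List.replicate c 0 ++ gaps l := by
  induction c with
  | zero => simp
  | succ c ih => simp [List.replicate_succ, ih]

/-! ### splitBy bridge -/

/-- simple (non-tail-recursive) model of `List.splitBy.loop`. -/
def sbF (R : α → α → Bool) : List α → α → List α → List (List α)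
  | x :: l, a, g => if R a x then sbF R l x (a :: g) else (a :: g).reverse :: sbF R l x []
  | [], a, g => [(a :: g).reverse]

lemma loop_eq (R : α → α → Bool) (l : List α) : ∀ a g gs,
    List.splitBy.loop R l a g gs = gs.reverse ++ sbF R l a g := by
  induction l with
  | nil => intro a g gs; simp [List.splitBy.loop, sbF]
  | cons x l ih =>
    intro a g gs
    cases hR : R a x <;> simp [List.splitBy.loop, hR, sbF, ih]

lemma splitBy_cons (R : α → α → Bool) (a : α) (l : List α) :
    List.splitBy R (a :: l) = sbF R l a [] := by
  simp [List.splitBy, loop_eq]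

/-- run-length counting model -/
def cnt2 : List DyckStep → DyckStep → ℕ → ℕ
  | [], a, c => if a = U ∧ 2 ≤ c then 1 else 0
  | x :: l, a, c => if x = a then cnt2 l a (c + 1) else
      (if a = U ∧ 2 ≤ c then 1 else 0) + cnt2 l x 1

/-- the filter predicate from `longAscents` -/
def P (r : List DyckStep) : Bool := r.head? == some U && decide (2 ≤ r.length)

lemma getLast?_all_eq (g : List DyckStep) (a : DyckStep) (h : ∀ x ∈ g, x = a) :
    (a :: g).getLast? = some a := by
  induction g with
  | nil => rfl
  | cons b g ih =>
    rw [List.getLast?_cons_cons]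
    have hb : b = a := h b (by simp)
    subst hb
    exact ih fun x hx => h x (by simp [hx])

lemma filter_sbF (l : List DyckStep) : ∀ a g, (∀ x ∈ g, x = a) →
    ((sbF (· == ·) l a g).filter P).length = cnt2 l a (g.length + 1) := by
  induction l with
  | nil =>
    intro a g hg
    have hP : P ((a :: g).reverse) = (a == U && decide (2 ≤ g.length + 1)) := by
      rw [P, List.head?_reverse, getLast?_all_eq g a hg]
      simp
    rw [sbF, show [(a :: g).reverse] = (a :: g).reverse :: [] from rfl, List.filter_cons, cnt2]
    by_cases h : a = U ∧ 2 ≤ g.length + 1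
    · have hT : P ((a :: g).reverse) = true := by rw [hP, h.1]; simp [h.2]
      rw [if_pos h, hT]
      simp
    · have hF : P ((a :: g).reverse) = false := by
        rw [hP]; cases a
        · simp only [Bool.and_eq_false_iff]
          right
          simpa using fun hc => h ⟨rfl, hc⟩
        · rfl
      rw [if_neg h, hF]
      simp
  | cons x l ih =>
    intro a g hg
    cases hR : (a == x) with
    | true =>
      have hax : x = a := (beq_iff_eq.mp hR).symm
      subst hax
      rw [sbF, if_pos hR, ih x (x :: g) (fun y hy => by
        rcases List.mem_cons.mp hy with h | h
        · exact h
        · exact hg y h)]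
      simp [cnt2]
    | false =>
      have hax : ¬ (x = a) := fun h => by simp [h] at hR
      rw [sbF, if_neg (by simp [hR]), cnt2, if_neg hax]
      have hP : P ((a :: g).reverse) = (a == U && decide (2 ≤ g.length + 1)) := by
        rw [P, List.head?_reverse, getLast?_all_eq g a hg]
        simp
      rw [List.filter_cons]
      have hrest := ih x [] (by simp)
      simp only [List.length_nil, Nat.zero_add] at hrest
      by_cases h : a = U ∧ 2 ≤ g.length + 1
      · have hT : P ((a :: g).reverse) = true := by rw [hP, h.1]; simp [h.2]
        rw [hT, if_pos h]
        simp only [if_true, List.length_cons, hrest]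
        omega
      · have hF : P ((a :: g).reverse) = false := by
          rw [hP]; cases a
          · simp only [Bool.and_eq_false_iff]
            right
            simpa using fun hc => h ⟨rfl, hc⟩
          · rfl
        rw [hF, if_neg h]
        simpa using hrest

lemma cnt2_eq_gaps (l : List DyckStep) : ∀ a c, 1 ≤ c →
    cnt2 l a c = (gaps (List.replicate c a ++ l ++ [D])).countP big := by
  induction l with
  | nil =>
    intro a c hc
    cases a with
    | U =>
      have : List.replicate c U ++ [] ++ [D] = List.replicate c U ++ D :: ([] : List DyckStep) := by
        simp
      rw [cnt2, this, gaps_run]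
      simp [big, List.countP_cons]
    | D =>
      have : List.replicate c D ++ [] ++ [D] = List.replicate c D ++ [D] := by simp
      rw [cnt2, this, gaps_replicate_D]
      simp [big, List.countP_append, List.countP_replicate]
  | cons x l ih =>
    intro a c hc
    by_cases hx : x = a
    · subst hx
      have : List.replicate c x ++ (x :: l) ++ [D] = List.replicate (c + 1) x ++ l ++ [D] := by
        rw [List.replicate_succ']
        simp
      rw [cnt2, if_pos rfl, this, ih x (c+1) (by omega)]
    · rw [cnt2, if_neg hx]
      cases a with
      | U =>
        have hxD : x = D := by cases x; exact absurd rfl hx; rfl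
        subst hxD
        have : List.replicate c U ++ (D :: l) ++ [D] = List.replicate c U ++ D :: (l ++ [D]) := by
          simp
        rw [this, gaps_run, ih D 1 le_rfl]
        simp only [List.countP_cons, List.replicate_one, List.singleton_append, gaps_D_cons]
        have h0 : big 0 = false := by simp [big]
        simp [h0, big]
        omega
      | D =>
        have hxU : x = U := by cases x; rfl; exact absurd rfl hx
        subst hxU
        have : List.replicate c D ++ (U :: l) ++ [D] = List.replicate c D ++ (U :: (l ++ [D])) := by
          simp
        rw [this, gaps_replicate_D, ih U 1 le_rfl]
        simp only [List.countP_append, List.countP_replicate]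
        have h0 : big 0 = false := by simp [big]
        simp [h0]


/-- prefix-domination property making `word g` a Dyck word followed by `D`. -/
def good (g : List ℕ) : Prop := ∀ t < g.length, t ≤ (g.take t).sum

/-- slack version of the prefix inequality for `word`. -/
lemma word_prefix_le (g : List ℕ) : ∀ c i, (∀ t < g.length, t ≤ c + (g.take t).sum) →
    i < (word g).length →
    ((word g).take i).count D ≤ c + ((word g).take i).count U := by
  induction g with
  | nil => intro c i _ hi; simp at hi
  | cons a g ih =>
    intro c i hgood hi
    rw [word_cons] at hi ⊢
    by_cases hia : i ≤ a
    · rw [List.take_append_of_le_length (by simpa using hia), List.take_replicate]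
      simp [List.count_replicate]
    · -- i = a + 1 + j
      obtain ⟨j, rfl⟩ : ∃ j, i = a + (1 + j) := ⟨i - a - 1, by omega⟩
      have key : (List.replicate a U ++ D :: word g).take (a + (1 + j)) =
          List.replicate a U ++ (D :: word g).take (1 + j) := by
        simpa using List.take_length_add_append (l₁ := List.replicate a U) (l₂ := D :: word g) (1 + j)
      rw [key, List.take_cons (by omega : 0 < 1 + j)]
      have hj : 1 + j - 1 = j := by omega
      rw [hj]
      simp only [List.count_append, List.count_replicate, List.count_cons]
      have hlen : j < (word g).length := by
        simp only [List.length_append, List.length_replicate, List.length_cons] at hi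
        omega
      have hgne : g ≠ [] := by
        intro h; subst h; simp at hlen
      have hg1 : 1 ≤ g.length := List.length_pos_iff.mpr hgne
      have hca : 1 ≤ c + a := by
        have h1 := hgood 1 (by simp only [List.length_cons]; omega)
        have hs : (List.take 1 (a :: g)).sum = a := by simp
        rw [hs] at h1
        exact h1
      have htail : ∀ t < g.length, t ≤ (c + a - 1) + (g.take t).sum := by
        intro t ht
        have := hgood (t + 1) (by simp; omega)
        rw [List.take_cons (by omega : 0 < t + 1)] at this
        simp only [List.sum_cons] at this
        have ht1 : t + 1 - 1 = t := by omega
        rw [ht1] at this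
        omega
      have := ih (c + a - 1) j htail hlen
      simp [DyckStep] at this ⊢
      omega

lemma sum_take_le (g : List ℕ) (t : ℕ) : (g.take t).sum ≤ g.sum := by
  conv_rhs => rw [← List.take_append_drop t g]
  rw [List.sum_append]
  omega

/-- at gap-block boundaries, the prefix of `word g` is `word (take t g)`. -/
lemma take_word (g : List ℕ) (t : ℕ) :
    (word g).take ((g.take t).sum + t) = word (g.take t) := by
  rcases le_or_gt t g.length with ht | ht
  · have h1 : word g = word (g.take t) ++ word (g.drop t) := by
      rw [← word_append, List.take_append_drop]
    have h2 : (word (g.take t)).length = (g.take t).sum + t := by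
      rw [length_word, List.length_take]
      omega
    rw [h1, ← h2, List.take_left]
  · have hgt : g.take t = g := List.take_of_length_le (le_of_lt ht)
    rw [hgt, List.take_of_length_le (by rw [length_word]; omega)]


lemma word_concat (g : List ℕ) (hg : g ≠ []) : ∃ l', word g = l' ++ [D] := by
  induction g with
  | nil => exact absurd rfl hg
  | cons a g ih =>
    rcases eq_or_ne g [] with rfl | hne
    · exact ⟨List.replicate a U, by simp [word_cons]⟩
    · obtain ⟨l'', h⟩ := ih hne
      exact ⟨List.replicate a U ++ D :: l'', by simp [word_cons, h]⟩

lemma dropLast_word_concat (g : List ℕ) (hg : g ≠ []) :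
    (word g).dropLast ++ [D] = word g := by
  obtain ⟨l', h⟩ := word_concat g hg
  rw [h, List.dropLast_concat]

/-- build a Dyck word from a good gap list. -/
def mkDyck (g : List ℕ) (h1 : g.sum + 1 = g.length) (hgood : good g) : DyckWord where
  toList := (word g).dropLast
  count_U_eq_count_D := by
    have hne : g ≠ [] := by intro h; subst h; simp at h1
    obtain ⟨l', h⟩ := word_concat g hne
    have hU := countU_word g
    have hD := countD_word g
    rw [h] at hU hD
    simp only [List.count_append, List.count_cons, List.count_nil] at hU hD
    rw [h, List.dropLast_concat]
    simp at hU hD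
    omega
  count_D_le_count_U := by
    intro i
    have hne : g ≠ [] := by intro h; subst h; simp at h1
    obtain ⟨l', h⟩ := word_concat g hne
    rw [h, List.dropLast_concat]
    have hlen : l'.length + 1 = (word g).length := by rw [h]; simp
    have main : ∀ i' < (word g).length,
        ((word g).take i').count D ≤ ((word g).take i').count U := by
      intro i' hi'
      have := word_prefix_le g 0 i' (fun t ht => by simpa using hgood t ht) hi'
      simpa using this
    rcases le_or_gt i l'.length with hi | hi
    · have : l'.take i = (word g).take i := by
        rw [h, List.take_append_of_le_length hi]
      rw [this]
      exact main i (by omega)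
    · rw [List.take_of_length_le (by omega)]
      have : l' = (word g).take l'.length := by
        rw [h, List.take_append_of_le_length le_rfl, List.take_of_length_le le_rfl]
      rw [this]
      exact main l'.length (by omega)

lemma mkDyck_toList (g : List ℕ) (h1 : g.sum + 1 = g.length) (hgood : good g) :
    (mkDyck g h1 hgood).toList ++ [D] = word g := by
  have hne : g ≠ [] := by intro h; subst h; simp at h1
  exact dropLast_word_concat g hne

lemma semilength_mkDyck (g : List ℕ) (h1 : g.sum + 1 = g.length) (hgood : good g) :
    (mkDyck g h1 hgood).semilength = g.sum := by
  have h := mkDyck_toList g h1 hgood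
  have hU := countU_word g
  rw [← h] at hU
  simp only [List.count_append, List.count_cons, List.count_nil] at hU
  simp at hU
  rw [DyckWord.semilength, hU]

/-- the gap list of a Dyck word (with a sentinel `D` appended). -/
def enc (w : DyckWord) : List ℕ := gaps (w.toList ++ [D])

lemma word_enc (w : DyckWord) : word (enc w) = w.toList ++ [D] := word_gaps_concat _

lemma enc_length (w : DyckWord) : (enc w).length = w.semilength + 1 := by
  have h := countD_word (enc w)
  rw [word_enc] at h
  simp only [List.count_append, List.count_cons, List.count_nil] at h
  rw [← h, DyckWord.semilength_eq_count_D]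
  simp

lemma enc_sum (w : DyckWord) : (enc w).sum = w.semilength := by
  have h := countU_word (enc w)
  rw [word_enc] at h
  simp only [List.count_append, List.count_cons, List.count_nil] at h
  rw [← h, DyckWord.semilength]
  simp

lemma good_enc (w : DyckWord) : good (enc w) := by
  intro t ht
  set g := enc w with hg
  have hsum : g.sum + 1 = g.length := by rw [enc_sum, enc_length]
  have htw := take_word g t
  have hlen_take : (g.take t).length = t := by rw [List.length_take]; omega
  have hD : ((word g).take ((g.take t).sum + t)).count D = t := by
    rw [htw, countD_word, hlen_take]
  have hU : ((word g).take ((g.take t).sum + t)).count U = (g.take t).sum := by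
    rw [htw, countU_word]
  have hb : (g.take t).sum + t ≤ w.toList.length := by
    have h2 : 2 * w.semilength = w.toList.length := w.two_mul_semilength_eq_length
    have := sum_take_le g t
    rw [enc_sum] at this
    rw [enc_length] at ht
    omega
  have heq : (word g).take ((g.take t).sum + t) = w.toList.take ((g.take t).sum + t) := by
    rw [word_enc, List.take_append_of_le_length hb]
  have hdyck := w.count_D_le_count_U ((g.take t).sum + t)
  rw [heq] at hD hU
  omega

lemma enc_mkDyck (g : List ℕ) (h1 : g.sum + 1 = g.length) (hgood : good g) :
    enc (mkDyck g h1 hgood) = g := by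
  rw [enc, mkDyck_toList, gaps_word]

lemma mkDyck_enc (w : DyckWord) (h1 : (enc w).sum + 1 = (enc w).length)
    (hgood : good (enc w)) : mkDyck (enc w) h1 hgood = w := by
  ext1
  have h := mkDyck_toList (enc w) h1 hgood
  rw [word_enc] at h
  exact List.append_cancel_right h


lemma good_rotate_iff (g : List ℕ) (hm : g.sum + 1 = g.length) (r : ℕ) (hr : r < g.length) :
    good (g.rotate r) ↔
      ((∀ u, r ≤ u → u < g.length → (g.take r).sum + u ≤ (g.take u).sum + r) ∧
       (r = 0 ∨ (g.take r).sum + 1 ≤ r) ∧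
       (∀ u, 1 ≤ u → u < r → (g.take r).sum + u < (g.take u).sum + r)) := by
  set m := g.length with hmdef
  have hrot : g.rotate r = g.drop r ++ g.take r := List.rotate_eq_drop_append_take hr.le
  have hlenrot : (g.rotate r).length = m := List.length_rotate g r
  have hlend : (g.drop r).length = m - r := by simp [hmdef]
  have hlent : (g.take r).length = r := by simp [hmdef]; omega
  have hds : (g.take r).sum + (g.drop r).sum = g.sum := List.sum_take_add_sum_drop g r
  have key : ∀ t, t ≤ m - r → ((g.rotate r).take t).sum + (g.take r).sum = (g.take (r + t)).sum := by
    intro t ht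
    rw [hrot, List.take_append_of_le_length (by omega)]
    rw [List.take_add]
    rw [List.sum_append]
    omega
  have key2 : ∀ i, i ≤ r → ((g.rotate r).take ((m - r) + i)).sum + (g.take r).sum
      = g.sum + (g.take i).sum := by
    intro i hi
    rw [hrot]
    have h1 : (g.drop r ++ g.take r).take ((m - r) + i) = g.drop r ++ (g.take r).take i := by
      rw [← hlend, List.take_length_add_append]
    rw [h1, List.sum_append, List.take_take, min_eq_left hi]
    omega
  have htakem : g.take m = g := List.take_of_length_le le_rfl
  constructor
  · intro hgood
    refine ⟨?_, ?_, ?_⟩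
    · intro u hru hum
      have ht := hgood (u - r) (by omega)
      have hk := key (u - r) (by omega)
      rw [show r + (u - r) = u by omega] at hk
      omega
    · rcases Nat.eq_zero_or_pos r with h0 | h0
      · exact Or.inl h0
      · right
        have ht := hgood (m - r) (by omega)
        have hk := key (m - r) (by omega)
        rw [show r + (m - r) = m by omega, htakem] at hk
        omega
    · intro u h1 hur
      have ht := hgood ((m - r) + u) (by omega)
      have hk := key2 u (by omega)
      omega
  · rintro ⟨hA, hC, hB⟩ t ht
    rw [hlenrot] at ht
    rcases le_or_gt t (m - r) with h | h
    · have hk := key t h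
      rcases lt_or_eq_of_le (show r + t ≤ m by omega) with h2 | h2
      · have := hA (r + t) (by omega) h2
        omega
      · rw [h2, htakem] at hk
        rcases hC with h0 | h0
        · omega
        · omega
    · have hi : t = (m - r) + (t - (m - r)) := by omega
      have hk := key2 (t - (m - r)) (by omega)
      have hb := hB (t - (m - r)) (by omega) (by omega)
      rw [← hi] at hk
      omega

theorem cycle_lemma (g : List ℕ) (hm : g.sum + 1 = g.length) :
    ∃! r, r < g.length ∧ good (g.rotate r) := by
  set m := g.length with hmdef
  have hm0 : 0 < m := by omega
  set f : ℕ → ℕ := fun u => (g.take u).sum + (m - u) with hf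
  have hne : (Finset.range m).Nonempty := ⟨0, Finset.mem_range.mpr hm0⟩
  obtain ⟨u0, hu0, hMeq⟩ := Finset.exists_mem_eq_inf' hne f
  set M := (Finset.range m).inf' hne f with hM
  have hex : ∃ u, u < m ∧ f u = M := ⟨u0, Finset.mem_range.mp hu0, hMeq.symm⟩
  set r := Nat.find hex with hrdef
  obtain ⟨hrm, hfr⟩ : r < m ∧ f r = M := Nat.find_spec hex
  have hmin : ∀ u, u < m → M ≤ f u := fun u hu =>
    Finset.inf'_le f (Finset.mem_range.mpr hu)
  have hfirst : ∀ u, u < r → f u ≠ M := by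
    intro u hu hequ
    exact (Nat.find_min hex hu) ⟨by omega, hequ⟩
  have hf0 : f 0 = m := by simp [hf]
  have hsum_le : ∀ u, (g.take u).sum ≤ g.sum := sum_take_le g
  refine ⟨r, ⟨hrm, ?_⟩, ?_⟩
  · rw [good_rotate_iff g hm r hrm]
    refine ⟨?_, ?_, ?_⟩
    · intro u hru hum
      have := hmin u hum
      rw [← hfr] at this
      simp only [hf] at this
      omega
    · rcases Nat.eq_zero_or_pos r with h0 | h0
      · exact Or.inl h0
      · right
        have hne0 : f r ≠ f 0 := by
          intro hcontra
          have : (0 : ℕ) < r := h0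
          exact hfirst 0 this (by rw [← hcontra, hfr])
        have hle : M ≤ f 0 := hmin 0 hm0
        rw [hf0] at hne0 hle
        simp only [hf] at hfr hne0 ⊢
        omega
    · intro u h1 hur
      have hne' := hfirst u hur
      have hle := hmin u (by omega)
      rw [← hfr] at hle hne'
      simp only [hf] at hle hne' ⊢
      omega
  · rintro r' ⟨hr'm, hgood'⟩
    rw [good_rotate_iff g hm r' hr'm] at hgood'
    obtain ⟨hA, hC, hB⟩ := hgood'
    -- f r' is the minimum and r' is the first position attaining it
    have hler : ∀ u, u < m → f r' ≤ f u := by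
      intro u hum
      rcases le_or_gt r' u with h | h
      · have := hA u h hum
        simp only [hf]
        omega
      · rcases Nat.eq_zero_or_pos u with rfl | hu1
        · rw [hf0]
          rcases hC with h0 | h0
          · omega
          · simp only [hf]; omega
        · have := hB u hu1 h
          simp only [hf]
          omega
    have hfr' : f r' = M := le_antisymm (le_trans (hler u0 (Finset.mem_range.mp hu0)) (le_of_eq hMeq.symm)) (hmin r' hr'm)
    have hrler' : r ≤ r' := Nat.find_min' hex ⟨hr'm, hfr'⟩
    rcases lt_or_eq_of_le hrler' with hlt | heq
    · exfalso
      rcases Nat.eq_zero_or_pos r with h0 | h0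
      · -- r = 0 < r'
        have h1 : f r' < f 0 := by
          rcases hC with hc | hc
          · omega
          · rw [hf0]; simp only [hf]; omega
        rw [hf0] at h1
        rw [h0, hf0] at hfr
        omega
      · have hBr := hB r h0 hlt
        have h2 : f r' < f r := by simp only [hf]; omega
        rw [hfr, hfr'] at h2
        exact absurd h2 (lt_irrefl M)
    · exact heq.symm
  

/-! ### Counting gap lists -/

/-- the Finset of all lists of naturals of length `m` and sum `t`. -/
def L : ℕ → ℕ → Finset (List ℕ)
  | 0, t => if t = 0 then {[]} else ∅
  | m+1, t => (Finset.range (t+1)).biUnion fun v => (L m (t - v)).image (v :: ·)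

lemma mem_L : ∀ m t l, l ∈ L m t ↔ l.length = m ∧ l.sum = t := by
  intro m
  induction m with
  | zero =>
    intro t l
    rw [L]
    rcases eq_or_ne t 0 with rfl | ht
    · rw [if_pos rfl]
      simp only [Finset.mem_singleton]
      constructor
      · rintro rfl; simp
      · rintro ⟨h1, _⟩; exact List.length_eq_zero_iff.mp h1
    · rw [if_neg ht]
      simp only [Finset.notMem_empty, false_iff, not_and]
      intro h1 h2
      exact ht (by rw [← h2, List.length_eq_zero_iff.mp h1]; rfl)
  | succ m ih =>
    intro t l
    rw [L]
    simp only [Finset.mem_biUnion, Finset.mem_range, Finset.mem_image]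
    constructor
    · rintro ⟨v, hv, l', hl', rfl⟩
      have hv' : v < t + 1 := by simpa using hv
      rw [ih] at hl'
      refine ⟨by simp [hl'.1], ?_⟩
      simp only [List.sum_cons, hl'.2]
      omega
    · rintro ⟨h1, h2⟩
      match l with
      | [] => simp at h1
      | v :: l' =>
        simp only [List.length_cons] at h1
        simp only [List.sum_cons] at h2
        exact ⟨v, by omega, l', by rw [ih]; constructor <;> omega, rfl⟩

lemma L_disjoint (m t : ℕ) : ∀ x ∈ Finset.range (t+1), ∀ y ∈ Finset.range (t+1), x ≠ y →
    Disjoint ((L m (t - x)).image (x :: ·)) ((L m (t - y)).image (y :: ·)) := by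
  intro x _ y _ hxy
  simp only [Finset.disjoint_left]
  intro a ha ha'
  simp only [Finset.mem_image] at ha ha'
  obtain ⟨l1, _, rfl⟩ := ha
  obtain ⟨l2, _, heq⟩ := ha'
  exact hxy (List.head_eq_of_cons_eq heq).symm

lemma card_L_zero (t : ℕ) : (L 0 t).card = if t = 0 then 1 else 0 := by
  rcases eq_or_ne t 0 with rfl | ht
  · rw [L, if_pos rfl, if_pos rfl]; rfl
  · rw [L, if_neg ht, if_neg ht]; rfl

lemma cons_injective (v : ℕ) : Function.Injective (v :: · : List ℕ → List ℕ) :=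
  fun a b h => List.tail_eq_of_cons_eq h

lemma card_L_succ (m t : ℕ) :
    (L (m+1) t).card = ∑ v ∈ Finset.range (t+1), (L m (t - v)).card := by
  rw [L, Finset.card_biUnion (L_disjoint m t)]
  exact Finset.sum_congr rfl fun v _ => Finset.card_image_of_injective _ (cons_injective v)

lemma card_L_filter_succ (q : ℕ → Bool) (m t : ℕ) :
    ((L (m+1) t).filter (fun l => l.all q)).card
      = ∑ v ∈ Finset.range (t+1),
          if q v then ((L m (t - v)).filter (fun l => l.all q)).card else 0 := by
  rw [L, Finset.filter_biUnion]
  rw [Finset.card_biUnion (fun x hx y hy hxy =>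
    Finset.disjoint_filter_filter (L_disjoint m t x hx y hy hxy))]
  refine Finset.sum_congr rfl fun v _ => ?_
  rw [Finset.filter_image]
  rw [Finset.card_image_of_injective _ (cons_injective v)]
  by_cases hq : q v = true
  · rw [if_pos hq]
    congr 1
    apply Finset.filter_congr
    intro l _
    simp [hq]
  · have hq' : q v = false := by simpa using hq
    rw [if_neg (by simp [hq'])]
    rw [Finset.card_eq_zero]
    apply Finset.filter_false_of_mem
    intro l _
    simp [hq']

lemma card_L_zero_filter (q : ℕ → Bool) (t : ℕ) :
    ((L 0 t).filter (fun l => l.all q)).card = if t = 0 then 1 else 0 := by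
  rcases eq_or_ne t 0 with rfl | ht
  · rw [L, if_pos rfl, if_pos rfl, Finset.filter_singleton]
    rw [if_pos (by simp)]
    rfl
  · rw [L, if_neg ht, if_neg ht]
    rfl

/-- zero-one lists: binomial coefficient. -/
lemma card01 (m : ℕ) : ∀ t, ((L m t).filter (fun l => l.all (fun v => v ≤ 1))).card
    = m.choose t := by
  induction m with
  | zero =>
    intro t
    rw [card_L_zero_filter]
    rcases eq_or_ne t 0 with rfl | ht
    · simp
    · rw [if_neg ht, Nat.choose_eq_zero_of_lt (by omega)]
  | succ m ih =>
    intro t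
    rw [card_L_filter_succ]
    rcases eq_or_ne t 0 with rfl | ht
    · rw [Finset.sum_range_one, if_pos (by decide), ih]
      simp
    · have hsub : Finset.range 2 ⊆ Finset.range (t + 1) := by
        intro x hx
        simp only [Finset.mem_range] at hx ⊢
        omega
      rw [← Finset.sum_subset hsub]
      · rw [Finset.sum_range_succ, Finset.sum_range_one]
        rw [if_pos (by decide), if_pos (by decide), ih, ih, Nat.sub_zero]
        have h := Nat.choose_succ_succ' m (t-1)
        rw [show t - 1 + 1 = t by omega] at h
        omega
      · intro x hx hnx
        simp only [Finset.mem_range] at hx hnx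
        rw [if_neg (by simp; omega)]

/-- all lists: stars and bars. -/
lemma cardAll (k : ℕ) (hk : 1 ≤ k) : ∀ s, (L k s).card = (s + k - 1).choose (k - 1) := by
  induction k with
  | zero => omega
  | succ k ih =>
    intro s
    rcases Nat.eq_zero_or_pos k with rfl | hk1
    · rw [card_L_succ]
      rw [Finset.sum_congr rfl (fun v _ => card_L_zero (s - v))]
      rw [Finset.sum_eq_single_of_mem s (Finset.mem_range.mpr (by omega))]
      · simp
      · intro v hv hvs
        simp only [Finset.mem_range] at hv
        rw [if_neg (by omega)]
    · rw [card_L_succ]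
      rw [Finset.sum_congr rfl (fun v _ => ih hk1 (s - v))]
      have hre : ∑ v ∈ Finset.range (s+1), (s - v + k - 1).choose (k - 1)
          = ∑ i ∈ Finset.Icc (k-1) (s + k - 1), i.choose (k-1) := by
        apply Finset.sum_nbij' (fun v => s - v + k - 1) (fun i => s + k - 1 - i)
        · intro v hv
          simp only [Finset.mem_range] at hv
          simp only [Finset.mem_Icc]
          omega
        · intro i hi
          simp only [Finset.mem_Icc] at hi
          simp only [Finset.mem_range]
          omega
        · intro v hv
          simp only [Finset.mem_range] at hv
          omega
        · intro i hi
          simp only [Finset.mem_Icc] at hi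
          omega
        · intro v hv
          rfl
      rw [hre, Nat.sum_Icc_choose]
      congr 1 <;> omega

/-! ### list helper lemmas -/

lemma sum_map_sub_two : ∀ (l : List ℕ), (∀ x ∈ l, 2 ≤ x) →
    (l.map (· - 2)).sum + 2 * l.length = l.sum
  | [], _ => by simp
  | x :: l, h => by
    have hx := h x (by simp)
    have := sum_map_sub_two l (fun y hy => h y (by simp [hy]))
    simp only [List.map_cons, List.sum_cons, List.length_cons]
    omega

lemma sum_map_add_two : ∀ (l : List ℕ), (l.map (· + 2)).sum = l.sum + 2 * l.length
  | [] => by simp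
  | x :: l => by
    have := sum_map_add_two l
    simp only [List.map_cons, List.sum_cons, List.length_cons]
    omega

lemma map_sub_add_two : ∀ (l : List ℕ), (∀ x ∈ l, 2 ≤ x) →
    (l.map (· - 2)).map (· + 2) = l
  | [], _ => by simp
  | x :: l, h => by
    have hx := h x (by simp)
    have := map_sub_add_two l (fun y hy => h y (by simp [hy]))
    simp only [List.map_cons, this, List.cons.injEq, and_true]
    omega

lemma map_add_sub_two : ∀ (l : List ℕ), (l.map (· + 2)).map (· - 2) = l
  | [] => by simp
  | x :: l => by
    have := map_add_sub_two l
    simp [this]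

lemma sum_le_length01 : ∀ (l : List ℕ), (∀ x ∈ l, x ≤ 1) → l.sum ≤ l.length
  | [], _ => by simp
  | x :: l, h => by
    have hx := h x (by simp)
    have := sum_le_length01 l (fun y hy => h y (by simp [hy]))
    simp only [List.sum_cons, List.length_cons]
    omega

lemma sum_filter_not (q : ℕ → Bool) :
    ∀ (l : List ℕ), (l.filter q).sum + (l.filter (fun v => !q v)).sum = l.sum
  | [] => by simp
  | x :: l => by
    have := sum_filter_not q l
    by_cases hq : q x = true
    · rw [List.filter_cons, List.filter_cons, if_pos hq, if_neg (by simp [hq])]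
      simp only [List.sum_cons]
      omega
    · have hq' : q x = false := by simpa using hq
      rw [List.filter_cons, List.filter_cons, if_neg (by simp [hq']), if_pos (by simp [hq'])]
      simp only [List.sum_cons]
      omega

lemma length_filter_not (q : ℕ → Bool) :
    ∀ (l : List ℕ), (l.filter q).length + (l.filter (fun v => !q v)).length = l.length
  | [] => by simp
  | x :: l => by
    have := length_filter_not q l
    by_cases hq : q x = true
    · rw [List.filter_cons, List.filter_cons, if_pos hq, if_neg (by simp [hq])]
      simp only [List.length_cons]
      omega
    · have hq' : q x = false := by simpa using hq
      rw [List.filter_cons, List.filter_cons, if_neg (by simp [hq']), if_pos (by simp [hq'])]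
      simp only [List.length_cons]
      omega

lemma sum_map_pattern : ∀ (l : List ℕ),
    (l.map (fun v => if big v then 1 else 0)).sum = l.countP big
  | [] => by simp
  | x :: l => by
    have := sum_map_pattern l
    by_cases hb : big x = true
    · simp only [List.map_cons, List.sum_cons, if_pos hb, List.countP_cons, hb]
      omega
    · have hb' : big x = false := by simpa using hb
      simp only [List.map_cons, List.sum_cons, hb', if_false, List.countP_cons]
      omega

/-- big lists count -/
lemma cardBig (k j : ℕ) (hk : 1 ≤ k) (hj : 2*k ≤ j) :
    ((L k j).filter (fun l => l.all (fun v => 2 ≤ v))).card = (j - k - 1).choose (k - 1) := by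
  have hcard : ((L k j).filter (fun l => l.all (fun v => 2 ≤ v))).card
      = (L k (j - 2*k)).card := by
    refine Finset.card_bij' (fun l _ => l.map (· - 2)) (fun b _ => b.map (· + 2)) ?_ ?_ ?_ ?_
    · intro l hl
      simp only [Finset.mem_filter, mem_L, List.all_eq_true, decide_eq_true_eq] at hl
      obtain ⟨⟨hlen, hsum⟩, hall⟩ := hl
      rw [mem_L]
      have := sum_map_sub_two l hall
      constructor
      · simp [hlen]
      · omega
    · intro b hb
      rw [mem_L] at hb
      simp only [Finset.mem_filter, mem_L, List.all_eq_true, decide_eq_true_eq]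
      have := sum_map_add_two b
      refine ⟨⟨by simp [hb.1], by rw [this, hb.1, hb.2]; omega⟩, ?_⟩
      intro x hx
      simp only [List.mem_map] at hx
      obtain ⟨y, _, rfl⟩ := hx
      omega
    · intro l hl
      simp only [Finset.mem_filter, List.all_eq_true, decide_eq_true_eq] at hl
      exact map_sub_add_two l hl.2
    · intro b _
      exact map_add_sub_two b
  rw [hcard, cardAll k hk]
  congr 1
  omega

lemma cardBig_empty (k j : ℕ) (hj : ¬ 2*k ≤ j) :
    ((L k j).filter (fun l => l.all (fun v => 2 ≤ v))).card = 0 := by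
  rw [Finset.card_eq_zero]
  apply Finset.eq_empty_of_forall_notMem
  intro l hl
  simp only [Finset.mem_filter, mem_L, List.all_eq_true, decide_eq_true_eq] at hl
  obtain ⟨⟨hlen, hsum⟩, hall⟩ := hl
  have := sum_map_sub_two l hall
  apply hj
  rw [← hlen, ← hsum]
  omega

/-! ### merge -/

def mergeL : List ℕ → List ℕ → List ℕ → List ℕ
  | [], _, _ => []
  | x :: p, b, c =>
    if x = 1 then b.headI :: mergeL p b.tail c else c.headI :: mergeL p b c.tail

lemma mergeL_spec : ∀ (p b c : List ℕ), (∀ x ∈ p, x ≤ 1) → b.length = p.sum →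
    c.length = p.length - p.sum → (∀ x ∈ b, big x = true) → (∀ x ∈ c, big x = false) →
    (mergeL p b c).length = p.length ∧ (mergeL p b c).sum = b.sum + c.sum ∧
    (mergeL p b c).filter big = b ∧ (mergeL p b c).filter (fun v => !big v) = c ∧
    (mergeL p b c).map (fun v => if big v then 1 else 0) = p := by
  intro p
  induction p with
  | nil =>
    intro b c _ hlb hlc _ _
    have hb : b = [] := List.length_eq_zero_iff.mp (by simpa using hlb)
    have hc : c = [] := List.length_eq_zero_iff.mp (by simpa using hlc)
    subst hb; subst hc
    simp [mergeL]
  | cons x p ih =>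
    intro b c hp hlb hlc hb hc
    have hx : x ≤ 1 := hp x (by simp)
    have hple : p.sum ≤ p.length := sum_le_length01 p (fun y hy => hp y (by simp [hy]))
    have hptail : ∀ y ∈ p, y ≤ 1 := fun y hy => hp y (by simp [hy])
    rcases Nat.le_one_iff_eq_zero_or_eq_one.mp hx with rfl | rfl
    · -- x = 0 : take from c
      simp only [List.sum_cons, Nat.zero_add, List.length_cons] at hlb hlc
      have hcne : c ≠ [] := by
        intro h
        subst h
        simp only [List.length_nil] at hlc
        omega
      match c, hcne, hc with
      | z :: c', _, hc =>
        have hlc' : c'.length = p.length - p.sum := by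
          simp only [List.length_cons] at hlc
          omega
        have hz : big z = false := hc z (by simp)
        obtain ⟨h1, h2, h3, h4, h5⟩ := ih b c' hptail hlb hlc' hb
          (fun y hy => hc y (by simp [hy]))
        have hmerge : mergeL (0 :: p) b (z :: c') = z :: mergeL p b c' := by
          simp [mergeL]
        refine ⟨?_, ?_, ?_, ?_, ?_⟩
        · simp [hmerge, h1]
        · simp only [hmerge, List.sum_cons, h2]
          omega
        · rw [hmerge, List.filter_cons, if_neg (by simp [hz]), h3]
        · rw [hmerge, List.filter_cons, if_pos (by simp [hz]), h4]
        · rw [hmerge, List.map_cons, h5, if_neg (by simp [hz])]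
    · -- x = 1 : take from b
      simp only [List.sum_cons, List.length_cons] at hlb hlc
      have hbne : b ≠ [] := by
        intro h
        subst h
        simp only [List.length_nil] at hlb
        omega
      match b, hbne, hb, hlb with
      | y :: b', _, hb, hlb =>
        have hlb' : b'.length = p.sum := by
          simp only [List.length_cons] at hlb
          omega
        have hlc' : c.length = p.length - p.sum := by omega
        have hy : big y = true := hb y (by simp)
        obtain ⟨h1, h2, h3, h4, h5⟩ := ih b' c hptail hlb' hlc'
          (fun z hz => hb z (by simp [hz])) hc
        have hmerge : mergeL (1 :: p) (y :: b') c = y :: mergeL p b' c := by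
          simp [mergeL]
        refine ⟨?_, ?_, ?_, ?_, ?_⟩
        · simp [hmerge, h1]
        · simp only [hmerge, List.sum_cons, h2]
          omega
        · rw [hmerge, List.filter_cons, if_pos (by simp [hy]), h3]
        · rw [hmerge, List.filter_cons, if_neg (by simp [hy]), h4]
        · rw [hmerge, List.map_cons, h5, if_pos hy]

lemma mergeL_split : ∀ (l : List ℕ),
    mergeL (l.map (fun v => if big v then 1 else 0)) (l.filter big)
      (l.filter (fun v => !big v)) = l
  | [] => by simp [mergeL]
  | x :: l => by
    have ih := mergeL_split l
    by_cases hb : big x = true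
    · rw [List.map_cons, if_pos hb, List.filter_cons, if_pos (by simp [hb]),
        List.filter_cons, if_neg (by simp [hb])]
      rw [mergeL, if_pos rfl]
      simp [ih]
    · have hb' : big x = false := by simpa using hb
      rw [List.map_cons, if_neg (by simp [hb']), List.filter_cons, if_neg (by simp [hb']),
        List.filter_cons, if_pos (by simp [hb'])]
      rw [mergeL, if_neg (by omega)]
      simp [ih]

lemma filter_big_sum_lb (l : List ℕ) : 2 * l.countP big ≤ (l.filter big).sum := by
  have hall : ∀ x ∈ l.filter big, 2 ≤ x := by
    intro x hx
    have := List.of_mem_filter hx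
    simpa [big] using this
  have h1 := sum_map_sub_two (l.filter big) hall
  rw [List.countP_eq_length_filter]
  omega

lemma filter_big_sum_ub (l : List ℕ) : (l.filter big).sum ≤ l.sum := by
  have := sum_filter_not big l
  omega

lemma count_gap_lists (m s k : ℕ) (hk : 1 ≤ k) :
    ((L m s).filter (fun l => l.countP big = k)).card
      = ∑ j ∈ Finset.Icc (2*k) s,
          m.choose k * ((j - k - 1).choose (k - 1) * (m - k).choose (s - j)) := by
  rw [Finset.card_eq_sum_card_fiberwise (f := fun l => (l.filter big).sum)
    (t := Finset.Icc (2*k) s) ?hmem]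
  case hmem =>
    intro l hl
    simp only [Finset.mem_coe, Finset.mem_filter, mem_L] at hl
    obtain ⟨⟨hlen, hsum⟩, hcount⟩ := hl
    simp only [Finset.mem_coe, Finset.mem_Icc]
    have h1 := filter_big_sum_lb l
    have h2 := filter_big_sum_ub l
    rw [hcount] at h1
    omega
  refine Finset.sum_congr rfl fun j hj => ?_
  simp only [Finset.mem_Icc] at hj
  rw [Finset.filter_filter]
  have hbij : ((L m s).filter (fun l => l.countP big = k ∧ (l.filter big).sum = j)).card
      = (((L m k).filter (fun p => p.all (fun v => v ≤ 1))) ×ˢ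
         (((L k j).filter (fun b => b.all (fun v => 2 ≤ v))) ×ˢ
          ((L (m-k) (s-j)).filter (fun c => c.all (fun v => v ≤ 1))))).card := by
    refine Finset.card_bij'
      (fun l _ => (l.map (fun v => if big v then 1 else 0),
        (l.filter big, l.filter (fun v => !big v)))) (fun t _ => mergeL t.1 t.2.1 t.2.2)
      ?_ ?_ ?_ ?_
    · intro l hl
      simp only [Finset.mem_filter, mem_L] at hl
      obtain ⟨⟨hlen, hsum⟩, hcount, hbigsum⟩ := hl
      have hlf := length_filter_not big l
      have hsf := sum_filter_not big l
      have hcp : (l.filter big).length = k := by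
        rw [← List.countP_eq_length_filter, hcount]
      simp only [Finset.mem_product, Finset.mem_filter, mem_L, List.all_eq_true,
        decide_eq_true_eq]
      refine ⟨⟨⟨by simp [hlen], ?_⟩, ?_⟩, ⟨⟨hcp, hbigsum⟩, ?_⟩, ⟨⟨?_, ?_⟩, ?_⟩⟩
      · rw [sum_map_pattern, hcount]
      · intro x hx
        simp only [List.mem_map] at hx
        obtain ⟨y, _, rfl⟩ := hx
        split <;> omega
      · intro x hx
        have := List.of_mem_filter hx
        simpa [big] using this
      · omega
      · omega
      · intro x hx
        have := List.of_mem_filter hx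
        simp only [Bool.not_eq_true'] at this
        have h2 : ¬ 2 ≤ x := by simpa [big] using this
        omega
    · intro t ht
      obtain ⟨p, b, c⟩ := t
      simp only [Finset.mem_product, Finset.mem_filter, mem_L, List.all_eq_true,
        decide_eq_true_eq] at ht
      obtain ⟨⟨⟨hpl, hps⟩, hp1⟩, ⟨⟨hbl, hbs⟩, hb2⟩, ⟨hcl, hcs⟩, hc1⟩ := ht
      obtain ⟨h1, h2, h3, h4, h5⟩ := mergeL_spec p b c hp1 (by omega)
        (by omega)
        (fun x hx => by simp [big]; exact hb2 x hx)
        (fun x hx => by have := hc1 x hx; simp [big]; omega)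
      simp only [Finset.mem_filter, mem_L]
      refine ⟨⟨by omega, by omega⟩, ?_, ?_⟩
      · rw [List.countP_eq_length_filter, h3, hbl]
      · rw [h3, hbs]
    · intro l hl
      exact mergeL_split l
    · intro t ht
      obtain ⟨p, b, c⟩ := t
      simp only [Finset.mem_product, Finset.mem_filter, mem_L, List.all_eq_true,
        decide_eq_true_eq] at ht
      obtain ⟨⟨⟨hpl, hps⟩, hp1⟩, ⟨⟨hbl, hbs⟩, hb2⟩, ⟨hcl, hcs⟩, hc1⟩ := ht
      obtain ⟨h1, h2, h3, h4, h5⟩ := mergeL_spec p b c hp1 (by omega)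
        (by omega)
        (fun x hx => by simp [big]; exact hb2 x hx)
        (fun x hx => by have := hc1 x hx; simp [big]; omega)
      simp only [Prod.mk.injEq]
      exact ⟨h5, h3, h4⟩
  rw [hbij, Finset.card_product, Finset.card_product]
  rw [card01 m k, cardBig k j hk hj.1, card01 (m-k) (s-j)]

end DyckAux


/-- The number of long ascents (maximal runs of `U` steps of length at least 2) in a list of
Dyck steps. -/
def longAscents (l : List DyckStep) : ℕ :=
  ((l.splitBy (· == ·)).filter fun r => r.head? == some U && decide (2 ≤ r.length)).length

namespace DyckAux

lemma longAscents_eq (l : List DyckStep) :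
    longAscents l = (gaps (l ++ [D])).countP big := by
  cases l with
  | nil =>
    show 0 = (gaps [D]).countP big
    simp [big]
  | cons a l' =>
    have h1 : longAscents (a :: l') = ((sbF (· == ·) l' a []).filter P).length := by
      rw [longAscents, splitBy_cons]
      rfl
    rw [h1, filter_sbF l' a [] (by simp)]
    have h2 := cnt2_eq_gaps l' a 1 le_rfl
    simp only [List.length_nil, Nat.zero_add] at h2 ⊢
    rw [h2]
    congr 1

lemma enc_injective (w w' : DyckWord) (h : enc w = enc w') : w = w' := by
  have h1 : w.toList ++ [D] = w'.toList ++ [D] := by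
    rw [← word_enc, ← word_enc, h]
  ext1
  exact List.append_cancel_right h1

lemma mod_sub_cancel (n a b : ℕ) (ha : a < n+1) (hb : b < n+1)
    (h : (n+1-a) % (n+1) = (n+1-b) % (n+1)) : a = b := by
  rcases Nat.eq_zero_or_pos a with rfl | ha0 <;> rcases Nat.eq_zero_or_pos b with rfl | hb0
  · rfl
  · rw [Nat.sub_zero, Nat.mod_self, Nat.mod_eq_of_lt (by omega)] at h
    omega
  · rw [Nat.mod_eq_of_lt (by omega), Nat.sub_zero, Nat.mod_self] at h
    omega
  · rw [Nat.mod_eq_of_lt (by omega), Nat.mod_eq_of_lt (by omega)] at h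
    omega

lemma rotate_back {g : List ℕ} {n r : ℕ} (hlen : g.length = n + 1) (hr : r < n + 1) :
    (g.rotate r).rotate ((n + 1 - r) % (n + 1)) = g := by
  have hlr : (g.rotate r).length = n + 1 := by rw [List.length_rotate, hlen]
  rw [show (n+1-r) % (n+1) = (n+1-r) % (g.rotate r).length by rw [hlr], List.rotate_mod,
    List.rotate_rotate, show r + (n + 1 - r) = n + 1 by omega, ← hlen, List.rotate_length]

lemma main_card (n k : ℕ) :
    Nat.card {w : DyckWord // w.semilength = n ∧ longAscents w.toList = k} * (n+1)
      = ((L (n+1) n).filter (fun l => l.countP big = k)).card := by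
  classical
  set G := (L (n+1) n).filter (fun l => l.countP big = k) with hG
  have henclen : ∀ w : DyckWord, w.semilength = n → (enc w).length = n + 1 := fun w hw => by
    rw [enc_length, hw]
  have hencsum : ∀ w : DyckWord, w.semilength = n → (enc w).sum = n := fun w hw => by
    rw [enc_sum, hw]
  have henccnt : ∀ w : DyckWord, (enc w).countP big = longAscents w.toList := fun w => by
    rw [longAscents_eq]
    rfl
  have hmemG : ∀ (w : {w : DyckWord // w.semilength = n ∧ longAscents w.toList = k})
      (r : Fin (n+1)), (enc w.1).rotate r.1 ∈ G := by
    rintro ⟨w, hw1, hw2⟩ r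
    have hperm := List.rotate_perm (enc w) r.1
    rw [hG, Finset.mem_filter, mem_L]
    refine ⟨⟨?_, ?_⟩, ?_⟩
    · rw [List.length_rotate, henclen w hw1]
    · rw [hperm.sum_eq, hencsum w hw1]
    · rw [hperm.countP_eq, henccnt w, hw2]
  let f : ({w : DyckWord // w.semilength = n ∧ longAscents w.toList = k} × Fin (n+1)) →
      {l // l ∈ G} := fun p => ⟨(enc p.1.1).rotate p.2.1, hmemG p.1 p.2⟩
  have hbij : Function.Bijective f := by
    constructor
    · rintro ⟨⟨w, hw⟩, r⟩ ⟨⟨w', hw'⟩, r'⟩ hf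
      have hval : (enc w).rotate r.1 = (enc w').rotate r'.1 := congrArg Subtype.val hf
      have hglen : ((enc w).rotate r.1).length = n + 1 := by
        rw [List.length_rotate, henclen w hw.1]
      have hgsum : ((enc w).rotate r.1).sum = n := by
        rw [(List.rotate_perm _ _).sum_eq, hencsum w hw.1]
      obtain ⟨r0, hr0, huniq⟩ := cycle_lemma ((enc w).rotate r.1) (by omega)
      have hrot1 : ((enc w).rotate r.1).rotate ((n + 1 - r.1) % (n + 1)) = enc w :=
        rotate_back (henclen w hw.1) r.2
      have hrot2 : ((enc w).rotate r.1).rotate ((n + 1 - r'.1) % (n + 1)) = enc w' := by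
        rw [hval]
        exact rotate_back (henclen w' hw'.1) r'.2
      have he1 : (n + 1 - r.1) % (n + 1) = r0 := huniq _
        ⟨by rw [hglen]; exact Nat.mod_lt _ (by omega), by rw [hrot1]; exact good_enc w⟩
      have he2 : (n + 1 - r'.1) % (n + 1) = r0 := huniq _
        ⟨by rw [hglen]; exact Nat.mod_lt _ (by omega), by rw [hrot2]; exact good_enc w'⟩
      have hww : w = w' := by
        apply enc_injective
        rw [← hrot1, ← hrot2, he1, he2]
      have hrr : r = r' := by
        apply Fin.ext
        exact mod_sub_cancel n r.1 r'.1 r.2 r'.2 (by rw [he1, he2])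
      subst hww
      subst hrr
      rfl
    · rintro ⟨g, hg⟩
      rw [hG, Finset.mem_filter, mem_L] at hg
      obtain ⟨⟨hlen, hsum⟩, hcnt⟩ := hg
      obtain ⟨r0, ⟨hr0, hgood⟩, -⟩ := cycle_lemma g (by omega)
      have hg'len : (g.rotate r0).length = n + 1 := by rw [List.length_rotate, hlen]
      have hg'sum : (g.rotate r0).sum = n := by rw [(List.rotate_perm _ _).sum_eq, hsum]
      have h1 : (g.rotate r0).sum + 1 = (g.rotate r0).length := by omega
      set w := mkDyck (g.rotate r0) h1 hgood with hwdef
      have hsl : w.semilength = n := by rw [hwdef, semilength_mkDyck, hg'sum]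
      have hencw : enc w = g.rotate r0 := enc_mkDyck _ _ _
      have hla : longAscents w.toList = k := by
        rw [← henccnt w, hencw, (List.rotate_perm _ _).countP_eq, hcnt]
      refine ⟨⟨⟨w, hsl, hla⟩, ⟨(n + 1 - r0) % (n + 1), Nat.mod_lt _ (by omega)⟩⟩, ?_⟩
      apply Subtype.ext
      show (enc w).rotate ((n + 1 - r0) % (n + 1)) = g
      rw [hencw]
      exact rotate_back hlen (by rw [hlen] at hr0; exact hr0)
  have hcard := Nat.card_eq_of_bijective f hbij
  rw [Nat.card_prod, Nat.card_eq_finsetCard] at hcard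
  rw [← hcard]
  congr 1
  rw [Nat.card_eq_fintype_card, Fintype.card_fin]

end DyckAux

/-- The number of Dyck paths of semilength `n` with exactly `k ≥ 1` long
ascents equals `(1/(n+1)) C(n+1,k) ∑_{j=2k}^n C(j-k-1, k-1) C(n+1-k, n-j)`. -/
theorem dyck_long_ascents_count (n k : ℕ) (hk : 1 ≤ k) :
    (Nat.card {w : DyckWord // w.semilength = n ∧ longAscents w.toList = k} : ℚ) =
      (1 / (n + 1) : ℚ) * ((n + 1).choose k) *
        ∑ j ∈ Finset.Icc (2 * k) n, (((j - k - 1).choose (k - 1) : ℚ) *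
          ((n + 1 - k).choose (n - j))) := by
  have hmain := DyckAux.main_card n k
  rw [DyckAux.count_gap_lists (n+1) n k hk] at hmain
  have hq : (Nat.card {w : DyckWord // w.semilength = n ∧ longAscents w.toList = k} : ℚ)
      * (n + 1)
      = ∑ j ∈ Finset.Icc (2 * k) n, ((n + 1).choose k : ℚ) *
          (((j - k - 1).choose (k - 1) : ℚ) * ((n + 1 - k).choose (n - j))) := by
    exact_mod_cast hmain
  rw [← Finset.mul_sum] at hq
  have hpos : ((n : ℚ) + 1) ≠ 0 := by positivity
  field_simp
  linarith [hq]
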